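/- Let n be an odd prime, r, s ∈ ZMod n with s ≠ 0, and define X(r,s) = Π_s B F where B is the diagonal matrix with B_{k,k} = ω^{−rs·k(k−1)/2}, F the unitary Fourier matrix, and Π_s the permutation matrix with (Π_s)_{si,i}=1. Then X(r,s) is unitary, every entry of X(r,s) has absolute value 1/√n, and X(r,s)* (R^r S^s) X(r,s) is diagonal. -/

import Mathlib

open Matrix

/-- `ω n = e^{2πi/n}`. -/
noncomputable def omg (n : ℕ) : ℂ := Complex.exp (2 * Real.pi * Complex.I / n)

set_option linter.unusedSectionVars false

section basic
variable (n : ℕ) [NeZero n]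

lemma omg_prim : IsPrimitiveRoot (omg n) n := Complex.isPrimitiveRoot_exp n (NeZero.ne n)

lemma omg_ne_zero : omg n ≠ 0 := Complex.exp_ne_zero _

lemma omg_abs : ‖omg n‖ = 1 := by
  rw [omg, Complex.norm_exp]
  have : (2 * Real.pi * Complex.I / n).re = 0 := by
    simp [Complex.div_re]
  rw [this, Real.exp_zero]

noncomputable def ech (a : ZMod n) : ℂ := omg n ^ a.val

lemma ech_natCast (x : ℕ) : omg n ^ x = ech n (x : ZMod n) := by
  rw [ech, ZMod.val_natCast]
  conv_lhs => rw [← Nat.div_add_mod x n, pow_add, pow_mul, (omg_prim n).pow_eq_one, one_pow, one_mul]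

lemma ech_add (a b : ZMod n) : ech n (a + b) = ech n a * ech n b := by
  have : a + b = ((a.val + b.val : ℕ) : ZMod n) := by push_cast; simp [ZMod.natCast_val, ZMod.cast_id]
  rw [this, ← ech_natCast, pow_add, ech, ech]

lemma ech_zero : ech n 0 = 1 := by simp [ech]

lemma ech_abs (a : ZMod n) : ‖ech n a‖ = 1 := by
  simp [ech, map_pow, omg_abs]

lemma ech_ne_zero (a : ZMod n) : ech n a ≠ 0 := by
  intro h; have := ech_abs n a; rw [h] at this; simp at this

lemma ech_neg (a : ZMod n) : ech n (-a) = (ech n a)⁻¹ := by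
  refine eq_inv_of_mul_eq_one_left ?_
  rw [← ech_add]; simp [ech_zero]

lemma ech_intCast (x : ℤ) : omg n ^ x = ech n (x : ZMod n) := by
  obtain ⟨y, rfl | rfl⟩ := x.eq_nat_or_neg
  · rw [zpow_natCast, ech_natCast]; norm_cast
  · rw [_root_.zpow_neg, zpow_natCast, ech_natCast]
    push_cast
    rw [ech_neg]

lemma ech_conj (a : ZMod n) : (starRingEnd ℂ) (ech n a) = ech n (-a) := by
  rw [ech_neg, ← Complex.inv_eq_conj (ech_abs n a)]

lemma ech_sum (a : ZMod n) : ∑ k : ZMod n, ech n (k * a) = if a = 0 then (n : ℂ) else 0 := by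
  split_ifs with h
  · simp [h, ech_zero, Finset.card_univ]
  · have h1 : omg n ^ a.val ≠ 1 :=
      (omg_prim n).pow_ne_one_of_pos_of_lt
        (fun h0 => h ((ZMod.val_eq_zero a).mp h0)) a.val_lt
    have key : ∀ k : ZMod n, ech n (k * a) = (omg n ^ a.val) ^ k.val := by
      intro k
      rw [← pow_mul, ech_natCast, Nat.mul_comm]
      congr 1
      push_cast
      simp [ZMod.natCast_val, ZMod.cast_id]
    simp_rw [key]
    have : ∑ k : ZMod n, (omg n ^ a.val) ^ k.val = ∑ m ∈ Finset.range n, (omg n ^ a.val) ^ m := by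
      refine Finset.sum_nbij' (i := fun (k : ZMod n) => k.val)
        (j := fun (m : ℕ) => (m : ZMod n))
        (fun k _ => Finset.mem_range.mpr k.val_lt)
        (fun m _ => Finset.mem_univ _)
        (fun k _ => by simp [ZMod.natCast_val, ZMod.cast_id])
        (fun m hm => ZMod.val_natCast_of_lt (Finset.mem_range.mp hm))
        (fun k _ => rfl)
    rw [this, geom_sum_eq h1, ← pow_mul, Nat.mul_comm, pow_mul, (omg_prim n).pow_eq_one, one_pow,
      sub_self, zero_div]
end basic

/-- The cyclic shift matrix: `S_{i,j} = 1` iff `i + 1 = j` in `ZMod n`. -/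
noncomputable def Smat (n : ℕ) : Matrix (ZMod n) (ZMod n) ℂ :=
  Matrix.of fun i j => if i + 1 = j then 1 else 0

/-- The diagonal matrix `R` with `R_{j,j} = ω^j`. -/
noncomputable def Rmat (n : ℕ) : Matrix (ZMod n) (ZMod n) ℂ :=
  Matrix.diagonal fun j => omg n ^ (j.val)

/-- The permutation matrix `Π_s`, with `(Π_s)_{s i, i} = 1`. -/
noncomputable def Pmat (n : ℕ) (s : ZMod n) : Matrix (ZMod n) (ZMod n) ℂ :=
  Matrix.of fun i j => if i = s * j then 1 else 0

/-- The unitary Fourier matrix `F_{k,l} = ω^{kl}/√n`. -/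
noncomputable def Fmat (n : ℕ) : Matrix (ZMod n) (ZMod n) ℂ :=
  Matrix.of fun k l => omg n ^ (k.val * l.val) / Real.sqrt n

/-- The unitary matrix `X(r,s) = Π_s B F` with `B_{k,k} = ω^{-rs·k(k-1)/2}`. -/
noncomputable def Xmat (n : ℕ) [NeZero n] (r s : ZMod n) : Matrix (ZMod n) (ZMod n) ℂ :=
  Pmat n s *
    (Matrix.diagonal fun k : ZMod n =>
      omg n ^ (-((((r * s).val : ℤ)) * (k.val * (k.val - 1) / 2 : ℕ)))) *
    Fmat n

section mats
variable (n : ℕ) [NeZero n]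

/-- `c k = k(k-1)/2` as an element of `ZMod n`. -/
noncomputable def cfun (k : ZMod n) : ZMod n := ((k.val * (k.val - 1) / 2 : ℕ) : ZMod n)

lemma two_cfun (k : ZMod n) : (2 : ZMod n) * cfun n k = k * (k - 1) := by
  rw [cfun]
  have heven : 2 ∣ k.val * (k.val - 1) := by
    rcases Nat.even_or_odd k.val with h | h
    · exact Dvd.dvd.mul_right h.two_dvd _
    · rcases Nat.eq_zero_or_pos k.val with h0 | h0
      · simp [h0]
      · exact Dvd.dvd.mul_left (Nat.Odd.sub_odd h odd_one).two_dvd _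
  have : ((2 * (k.val * (k.val - 1) / 2) : ℕ) : ZMod n) = ((k.val * (k.val - 1) : ℕ) : ZMod n) := by
    rw [Nat.mul_div_cancel' heven]
  push_cast at this ⊢
  rw [this]
  rcases Nat.eq_zero_or_pos k.val with h0 | h0
  · have hk : k = 0 := (ZMod.val_eq_zero k).mp h0
    simp [h0, hk]
  · rw [Nat.cast_sub h0]
    push_cast
    simp [ZMod.natCast_val, ZMod.cast_id]

lemma cfun_succ [Fact (Nat.Prime n)] (hodd : Odd n) (k : ZMod n) :
    cfun n (k + 1) = cfun n k + k := by
  have h2 : (2 : ZMod n) ≠ 0 := by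
    intro hc
    have hdvd := (ZMod.natCast_eq_zero_iff 2 n).mp (by exact_mod_cast hc)
    have hn2 : n = 2 := (Nat.prime_dvd_prime_iff_eq Fact.out Nat.prime_two).mp hdvd
    rw [hn2] at hodd
    exact absurd hodd (by decide)
  apply mul_left_cancel₀ h2
  rw [mul_add, two_cfun, two_cfun]
  ring

lemma diag_entry (r s : ZMod n) (k : ZMod n) :
    omg n ^ (-((((r * s).val : ℤ)) * (k.val * (k.val - 1) / 2 : ℕ))) =
      ech n (-(r * s) * cfun n k) := by
  rw [ech_intCast]
  congr 1
  rw [Int.cast_neg, Int.cast_mul, Int.cast_natCast, Int.cast_natCast, ZMod.natCast_val,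
    ZMod.cast_id, neg_mul, cfun]

lemma Pmat_mul (s : ZMod n) [Fact (Nat.Prime n)] (hs : s ≠ 0)
    (A : Matrix (ZMod n) (ZMod n) ℂ) (i j : ZMod n) :
    (Pmat n s * A) i j = A (s⁻¹ * i) j := by
  rw [Matrix.mul_apply]
  have : ∀ k : ZMod n, (i = s * k) ↔ (s⁻¹ * i = k) := by
    intro k
    constructor
    · rintro rfl; rw [← mul_assoc, inv_mul_cancel₀ hs, one_mul]
    · rintro rfl; rw [← mul_assoc, mul_inv_cancel₀ hs, one_mul]
  simp only [Pmat, Matrix.of_apply, this, ite_mul, one_mul, zero_mul]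
  rw [Finset.sum_ite_eq Finset.univ (s⁻¹ * i) (fun k => A k j)]
  simp

lemma Fmat_apply (k l : ZMod n) : Fmat n k l = ech n (k * l) / Real.sqrt n := by
  rw [Fmat, Matrix.of_apply, ech_natCast]
  congr 2
  push_cast
  simp [ZMod.natCast_val, ZMod.cast_id]

lemma Xmat_apply [Fact (Nat.Prime n)] (r s : ZMod n) (hs : s ≠ 0) (i j : ZMod n) :
    Xmat n r s i j =
      ech n (-(r * s) * cfun n (s⁻¹ * i) + (s⁻¹ * i) * j) / Real.sqrt n := by
  rw [Xmat, Matrix.mul_assoc, Pmat_mul n s hs, Matrix.diagonal_mul, diag_entry,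
    Fmat_apply, ech_add]
  ring
end mats

section unit
variable (n : ℕ) [NeZero n] [Fact (Nat.Prime n)]

lemma Pmat_mem (s : ZMod n) (hs : s ≠ 0) : Pmat n s ∈ Matrix.unitaryGroup (ZMod n) ℂ := by
  rw [Matrix.mem_unitaryGroup_iff']
  ext i j
  simp only [Matrix.mul_apply, Matrix.star_apply, Pmat, Matrix.of_apply,
    apply_ite (star : ℂ → ℂ), star_one, star_zero, ite_mul, one_mul, zero_mul]
  rw [Finset.sum_ite_eq' Finset.univ (s * i) (fun k => if k = s * j then (1:ℂ) else 0)]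
  by_cases h : i = j
  · simp [h, Matrix.one_apply]
  · have : s * i ≠ s * j := fun hc => h (mul_left_cancel₀ hs hc)
    simp [Matrix.one_apply, h, this]

lemma Dmat_mem (r s : ZMod n) :
    (Matrix.diagonal fun k : ZMod n =>
      omg n ^ (-((((r * s).val : ℤ)) * (k.val * (k.val - 1) / 2 : ℕ)))) ∈
      Matrix.unitaryGroup (ZMod n) ℂ := by
  rw [Matrix.mem_unitaryGroup_iff', Matrix.star_eq_conjTranspose, Matrix.diagonal_conjTranspose,
    Matrix.diagonal_mul_diagonal, ← Matrix.diagonal_one]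
  apply congrArg Matrix.diagonal
  funext k
  simp only [Pi.mul_apply, Pi.star_apply]
  rw [diag_entry]
  simp only [Pi.star_apply, RCLike.star_def]
  rw [ech_conj, ← ech_add]
  simp [ech_zero]

lemma sqrtn_ne : ((Real.sqrt n : ℝ) : ℂ) ≠ 0 := by
  have : (0:ℝ) < Real.sqrt n := Real.sqrt_pos.mpr (by
    exact_mod_cast Nat.pos_of_ne_zero (NeZero.ne n))
  exact_mod_cast ne_of_gt this

lemma Fmat_mem : Fmat n ∈ Matrix.unitaryGroup (ZMod n) ℂ := by
  rw [Matrix.mem_unitaryGroup_iff']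
  ext i j
  rw [Matrix.mul_apply]
  have hterm : ∀ k : ZMod n, (star (Fmat n)) i k * Fmat n k j = ech n (k * (j - i)) / n := by
    intro k
    rw [Matrix.star_apply, Fmat_apply, Fmat_apply]
    simp only [RCLike.star_def, map_div₀, Complex.conj_ofReal]
    rw [ech_conj, div_mul_div_comm, ← ech_add]
    congr 1
    · congr 1; ring
    · rw [← Complex.ofReal_mul, Real.mul_self_sqrt (Nat.cast_nonneg n)]
      norm_num
  simp_rw [hterm]
  rw [← Finset.sum_div, ech_sum]
  by_cases h : i = j
  · rw [if_pos (by rw [h, sub_self])]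
    have hn : (n : ℂ) ≠ 0 := Nat.cast_ne_zero.mpr (NeZero.ne n)
    simp [Matrix.one_apply, h, div_self hn]
  · rw [if_neg (fun hc => h (by rwa [sub_eq_zero, eq_comm] at hc))]
    simp [Matrix.one_apply, h]
end unit

section key
variable (n : ℕ) [NeZero n] [Fact (Nat.Prime n)]

lemma Smat_pow (m : ℕ) (i j : ZMod n) :
    (Smat n ^ m) i j = if i + (m : ZMod n) = j then 1 else 0 := by
  induction m generalizing i j with
  | zero => simp [Matrix.one_apply]
  | succ m ih =>
    rw [pow_succ, Matrix.mul_apply]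
    simp_rw [ih]
    simp only [Smat, Matrix.of_apply, ite_mul, one_mul, zero_mul]
    rw [Finset.sum_ite_eq Finset.univ (i + (m : ZMod n))
      (fun k => if k + 1 = j then (1:ℂ) else 0)]
    simp only [Finset.mem_univ, if_true]
    congr 1
    push_cast
    rw [add_assoc]

lemma Rmat_pow (m : ℕ) : Rmat n ^ m = Matrix.diagonal fun j => ech n ((m : ZMod n) * j) := by
  rw [Rmat, Matrix.diagonal_pow]
  apply congrArg Matrix.diagonal
  funext j
  rw [Pi.pow_apply, ← pow_mul, ech_natCast]
  congr 1
  push_cast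
  rw [ZMod.natCast_val, ZMod.cast_id, mul_comm]

lemma key_comm (hodd : Odd n) (r s : ZMod n) (hs : s ≠ 0) :
    (Rmat n ^ r.val * Smat n ^ s.val) * Xmat n r s =
      Xmat n r s * Matrix.diagonal (fun j : ZMod n => ech n j) := by
  have hrv : ((r.val : ZMod n)) = r := by simp [ZMod.natCast_val, ZMod.cast_id]
  have hsv : ((s.val : ZMod n)) = s := by simp [ZMod.natCast_val, ZMod.cast_id]
  ext i j
  rw [Rmat_pow, Matrix.mul_apply, Matrix.mul_diagonal]
  have hlhs : ∀ k : ZMod n,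
      (Matrix.diagonal (fun j : ZMod n => ech n ((r.val : ZMod n) * j)) * Smat n ^ s.val) i k *
        Xmat n r s k j =
      (if i + s = k then (1:ℂ) else 0) * (ech n (r * i) * Xmat n r s k j) := by
    intro k
    rw [Matrix.diagonal_mul, Smat_pow, hrv, hsv]
    ring
  simp_rw [hlhs, ite_mul, one_mul, zero_mul]
  rw [Finset.sum_ite_eq Finset.univ (i + s)
    (fun k => ech n (r * i) * Xmat n r s k j)]
  simp only [Finset.mem_univ, if_true]
  rw [Xmat_apply n r s hs, Xmat_apply n r s hs]
  have hk : s⁻¹ * (i + s) = s⁻¹ * i + 1 := by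
    rw [mul_add, inv_mul_cancel₀ hs]
  rw [hk]
  set k := s⁻¹ * i with hkdef
  have hi : i = s * k := by
    rw [hkdef, ← mul_assoc, mul_inv_cancel₀ hs, one_mul]
  rw [mul_div_assoc', ← ech_add, div_mul_eq_mul_div, ← ech_add]
  congr 2
  rw [cfun_succ n hodd, hi]
  ring
end key


theorem stmt9 (n : ℕ) [NeZero n] [Fact (Nat.Prime n)] (hodd : Odd n)
    (r s : ZMod n) (hs : s ≠ 0) :
    Xmat n r s ∈ Matrix.unitaryGroup (ZMod n) ℂ ∧
      (∀ i j, ‖Xmat n r s i j‖ = 1 / Real.sqrt n) ∧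
      ((Xmat n r s)ᴴ * (Rmat n ^ r.val * Smat n ^ s.val) * Xmat n r s).IsDiag := by
  have hX : Xmat n r s ∈ Matrix.unitaryGroup (ZMod n) ℂ :=
    mul_mem (mul_mem (Pmat_mem n s hs) (Dmat_mem n r s)) (Fmat_mem n)
  refine ⟨hX, ?_, ?_⟩
  · intro i j
    rw [Xmat_apply n r s hs, norm_div, ech_abs, Complex.norm_real, Real.norm_eq_abs,
      abs_of_nonneg (Real.sqrt_nonneg _)]
  · have h1 : (Xmat n r s)ᴴ * Xmat n r s = 1 := by
      rw [← Matrix.star_eq_conjTranspose]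
      exact Matrix.mem_unitaryGroup_iff'.mp hX
    rw [Matrix.mul_assoc, key_comm n hodd r s hs, ← Matrix.mul_assoc, h1, Matrix.one_mul]
    exact Matrix.isDiag_diagonal _
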